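/- Assume Hypothesis 1 (with the Camina–Zieschang data from the context). Then 2 ≤ k₀ < v₀ and v₀ ≠ 3. -/
import Mathlib


open Finset

namespace FlagTransitivePaper

/-- A nontrivial 2-design `D` (point set `P`, blocks indexed by `ι`, the block `i`
having point set `blk i`) with parameters `(v, k, λ)`, replication number `r` and `b`
blocks, together with a group `G` acting on points and blocks as a flag-transitive
automorphism group of `D`, preserving a nontrivial partition `Σ` of `P` into `v₁`
classes of size `v₀`; the partition is encoded by the class map `proj : P → Q`, where
`Q` is the set of classes.  The structure also records the Camina–Zieschang data:
the constant `k₀` (every block meets every class in `0` or `k₀` points), `k₁ = k/k₀`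
(the constant number of classes met by a block, i.e. the size of the trace of a
block on `Σ`), the constant `μ` (the number of blocks inducing a given nonempty
trace on a given class) and the constant `η` (the number of blocks having a given
trace on `Σ`), as well as the parameters `λ₁` and `r₁` of the quotient structure
`D₁` (these are constrained only via `Hyp32`, i.e. when `D₁` is a 2-design). -/
structure Setting (P ι Q G : Type*) [Fintype P] [DecidableEq P] [Fintype ι]
    [Fintype Q] [DecidableEq Q] [Group G] [MulAction G P] [MulAction G ι]
    [MulAction G Q] where
  /-- the set of points of a block -/
  blk : ι → Finset P
  /-- the map sending a point to its class in the partition `Σ` -/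
  proj : P → Q
  v : ℕ
  k : ℕ
  lam : ℕ
  r : ℕ
  b : ℕ
  v₀ : ℕ
  v₁ : ℕ
  k₀ : ℕ
  k₁ : ℕ
  μ : ℕ
  η : ℕ
  lam₁ : ℕ
  r₁ : ℕ
  card_points : Fintype.card P = v
  card_blocks : Fintype.card ι = b
  two_lt_k : 2 < k
  k_lt_v : k < v
  blk_card : ∀ i : ι, (blk i).card = k
  pair_count : ∀ x y : P, x ≠ y →
    (univ.filter fun i : ι => x ∈ blk i ∧ y ∈ blk i).card = lam
  rep_count : ∀ x : P, (univ.filter fun i : ι => x ∈ blk i).card = r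
  smul_blk : ∀ (g : G) (i : ι), blk (g • i) = (blk i).image fun x => g • x
  flag_trans : ∀ (x : P) (i : ι), x ∈ blk i → ∀ (y : P) (j : ι), y ∈ blk j →
    ∃ g : G, g • x = y ∧ g • i = j
  proj_equivariant : ∀ (g : G) (x : P), proj (g • x) = g • proj x
  fiber_card : ∀ q : Q, (univ.filter fun x : P => proj x = q).card = v₀
  card_classes : Fintype.card Q = v₁
  one_lt_v₀ : 1 < v₀
  one_lt_v₁ : 1 < v₁
  two_le_k₀ : 2 ≤ k₀
  k₀_mul_k₁ : k₀ * k₁ = k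
  blk_fiber_card : ∀ (i : ι) (q : Q),
    ((blk i).filter fun x => proj x = q).card = 0 ∨
      ((blk i).filter fun x => proj x = q).card = k₀
  trace_card : ∀ i : ι,
    (univ.filter fun q : Q => ((blk i).filter fun x => proj x = q).Nonempty).card = k₁
  mu_count : ∀ (i : ι) (q : Q), ((blk i).filter fun x => proj x = q).Nonempty →
    (univ.filter fun j : ι =>
      (blk j).filter (fun x => proj x = q) = (blk i).filter fun x => proj x = q).card = μ
  eta_count : ∀ i : ι,
    (univ.filter fun j : ι =>
      (univ.filter fun q : Q => ((blk j).filter fun x => proj x = q).Nonempty) =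
        univ.filter fun q : Q => ((blk i).filter fun x => proj x = q).Nonempty).card = η

variable {P ι Q G : Type*} [Fintype P] [DecidableEq P] [Fintype ι] [Fintype Q]
  [DecidableEq Q] [Group G] [MulAction G P] [MulAction G ι] [MulAction G Q]

namespace Setting

variable (S : Setting P ι Q G)

/-- The trace of the block `i` on the class `q`, i.e. `B ∩ Δ`. -/
def fiberTrace (i : ι) (q : Q) : Finset P := (S.blk i).filter fun x => S.proj x = q

/-- The trace of the block `i` on `Σ`: the set of classes met by the block. -/
def trace (i : ι) : Finset Q := univ.filter fun q : Q => (S.fiberTrace i q).Nonempty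

/-- `A = gcd (k₁ − 1, v₁ − 1)`. -/
def A : ℕ := Nat.gcd (S.k₁ - 1) (S.v₁ - 1)

/-- `η₀ = gcd (η, v₀ / k₀)`. -/
def η₀ : ℕ := Nat.gcd S.η (S.v₀ / S.k₀)

/-- `η₁ = η / η₀`. -/
def η₁ : ℕ := S.η / S.η₀

/-- `r₁' = (v₀ / (k₀ η₀)) · ((v₀ − 1)/(k₀ − 1))`. -/
def r₁' : ℕ := S.v₀ / (S.k₀ * S.η₀) * ((S.v₀ - 1) / (S.k₀ - 1))

/-- **Hypothesis 1**: `λ` is a prime dividing `r`, `v ≤ 2λ²(λ−1)`, and the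
partition `Σ` is minimal (w.r.t. refinement) among the nontrivial `G`-invariant
partitions of the point set. -/
def Hyp1 : Prop :=
  S.lam.Prime ∧ S.lam ∣ S.r ∧ S.v ≤ 2 * S.lam ^ 2 * (S.lam - 1) ∧
    ∀ s : Setoid P,
      (∀ (g : G) (x y : P), s.r x y → s.r (g • x) (g • y)) →
      (∀ x y : P, s.r x y → S.proj x = S.proj y) →
      (∃ x y : P, x ≠ y ∧ s.r x y) →
      ∀ x y : P, s.r x y ↔ S.proj x = S.proj y

/-- The quotient structure `D₁` is a 2-design with parameters `(v₁, k₁, λ₁)`,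
where `λ₁ = v₀²λ/(k₀²η)`, with replication number `r₁ = (v₁−1)λ₁/(k₁−1)`:
any two distinct classes are met simultaneously by exactly `λ₁ · η` blocks. -/
def QuotientTwoDesign : Prop :=
  (∀ q q' : Q, q ≠ q' →
    (univ.filter fun i : ι => q ∈ S.trace i ∧ q' ∈ S.trace i).card = S.lam₁ * S.η) ∧
  S.lam₁ * (S.k₀ ^ 2 * S.η) = S.v₀ ^ 2 * S.lam ∧
  S.r₁ * (S.k₁ - 1) = S.lam₁ * (S.v₁ - 1)

/-- The quotient structure `D₁` is a symmetric 1-design with `k₁ = v₁ − 1`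
(in particular it has exactly `v₁` distinct blocks, namely the distinct traces). -/
def QuotientSymm1Design : Prop :=
  S.k₁ = S.v₁ - 1 ∧ (univ.image fun i : ι => S.trace i).card = S.v₁

/-- **Hypothesis 3/2**: Hypothesis 1 holds and `D₁` is a 2-`(v₁, k₁, λ₁)` design,
not a symmetric 1-design with `k₁ = v₁ − 1`. -/
def Hyp32 : Prop := S.Hyp1 ∧ S.QuotientTwoDesign ∧ ¬ S.QuotientSymm1Design

/-- **Hypothesis 2**: Hypothesis 3/2 holds, `r > k` and `λ > 3`. -/
def Hyp2 : Prop := S.Hyp32 ∧ S.k < S.r ∧ 3 < S.lam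

/-- `D₁` is of type I: `k₁ = (k₁, v₁) · (k₁, r/λ) · λ`. -/
def TypeI : Prop := S.k₁ = Nat.gcd S.k₁ S.v₁ * Nat.gcd S.k₁ (S.r / S.lam) * S.lam

/-- `D₁` is of type II: `k₁ = (k₁, v₁) · (k₁, r/λ)`. -/
def TypeII : Prop := S.k₁ = Nat.gcd S.k₁ S.v₁ * Nat.gcd S.k₁ (S.r / S.lam)

/-- `D₁` is of type Ia: type I, and `λ` divides none of `v₀(v₀−1)`, `v₁(v₁−1)`,
`v(v−1)`. -/
def TypeIa : Prop :=
  S.TypeI ∧ ¬ S.lam ∣ S.v₀ * (S.v₀ - 1) ∧ ¬ S.lam ∣ S.v₁ * (S.v₁ - 1) ∧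
    ¬ S.lam ∣ S.v * (S.v - 1)

/-- `D₁` is of type Ic: type I, and
`(v₀, k₀, v₁, k₁) = ((λ²+λ+2)/2, 2, (λ−1)(λ²−2)/2, λ²(λ−1)/4)`. -/
def TypeIc : Prop :=
  S.TypeI ∧ S.k₀ = 2 ∧ 2 * S.v₀ = S.lam ^ 2 + S.lam + 2 ∧
    2 * S.v₁ = (S.lam - 1) * (S.lam ^ 2 - 2) ∧ 4 * S.k₁ = S.lam ^ 2 * (S.lam - 1)

/-- `D₁` is of type IIb: type II and `λ > v₀`. -/
def TypeIIb : Prop := S.TypeII ∧ S.v₀ < S.lam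

/-- The permutation of the class `Δ = {x : P // proj x = q}` induced by an element
of the (setwise) stabiliser `G_Δ` of the class. -/
def classPerm (q : Q) (g : MulAction.stabilizer G q) :
    Equiv.Perm {x : P // S.proj x = q} where
  toFun x := ⟨(g : G) • (x : P), by
    rw [S.proj_equivariant, x.2]
    exact MulAction.mem_stabilizer_iff.mp g.2⟩
  invFun x := ⟨(g : G)⁻¹ • (x : P), by
    rw [S.proj_equivariant, x.2, inv_smul_eq_iff]
    exact (MulAction.mem_stabilizer_iff.mp g.2).symm⟩
  left_inv x := Subtype.ext (inv_smul_smul _ _)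
  right_inv x := Subtype.ext (smul_inv_smul _ _)

/-- The natural homomorphism from the stabiliser `G_Δ` of a class `Δ` of `Σ` to the
symmetric group on `Δ`; its range is the induced group `G_Δ^Δ`. -/
def classHom (q : Q) :
    MulAction.stabilizer G q →* Equiv.Perm {x : P // S.proj x = q} where
  toFun := S.classPerm q
  map_one' := by
    apply Equiv.ext
    intro x
    apply Subtype.ext
    show ((1 : MulAction.stabilizer G q) : G) • (x : P) = (x : P)
    simp
  map_mul' g h := by
    apply Equiv.ext
    intro x
    apply Subtype.ext
    show ((g * h : MulAction.stabilizer G q) : G) • (x : P) =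
      (g : G) • ((h : G) • (x : P))
    simp [mul_smul]

end Setting


section AuxCounting

variable (S : Setting P ι Q G)

private lemma sum_ite_card {α : Type*} [Fintype α] (p : α → Prop) [DecidablePred p]
    (c : ℕ) : (∑ a : α, if p a then c else 0) = (univ.filter p).card * c := by
  rw [← Finset.sum_filter, Finset.sum_const, smul_eq_mul]

private lemma count1 (x : P) : S.lam * (S.v - 1) = (S.k - 1) * S.r := by
  have lhs : ∀ y : P,
      (∑ i : ι, if y ≠ x ∧ x ∈ S.blk i ∧ y ∈ S.blk i then (1:ℕ) else 0)
      = if y ≠ x then S.lam else 0 := by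
    intro y
    by_cases h : y = x
    · simp [h]
    · rw [if_pos h, ← S.pair_count x y (fun e => h e.symm), Finset.card_filter]
      exact Finset.sum_congr rfl fun i _ => by simp [h]
  have rhs : ∀ i : ι,
      (∑ y : P, if y ≠ x ∧ x ∈ S.blk i ∧ y ∈ S.blk i then (1:ℕ) else 0)
      = if x ∈ S.blk i then S.k - 1 else 0 := by
    intro i
    by_cases h : x ∈ S.blk i
    · rw [if_pos h, ← Finset.card_filter]
      have he : (univ.filter fun y : P => y ≠ x ∧ x ∈ S.blk i ∧ y ∈ S.blk i)
          = (S.blk i).erase x := by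
        ext y; simp only [Finset.mem_filter, Finset.mem_erase, Finset.mem_univ,
          true_and]; try tauto
      rw [he, Finset.card_erase_of_mem h, S.blk_card]
    · simp [h]
  calc S.lam * (S.v - 1)
      = ∑ y : P, (if y ≠ x then S.lam else 0) := by
        rw [sum_ite_card, Finset.filter_ne',
          Finset.card_erase_of_mem (Finset.mem_univ x), Finset.card_univ,
          S.card_points, Nat.mul_comm]
    _ = ∑ y : P, ∑ i : ι, (if y ≠ x ∧ x ∈ S.blk i ∧ y ∈ S.blk i then 1 else 0) :=
        Finset.sum_congr rfl fun y _ => (lhs y).symm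
    _ = ∑ i : ι, ∑ y : P, (if y ≠ x ∧ x ∈ S.blk i ∧ y ∈ S.blk i then 1 else 0) :=
        Finset.sum_comm
    _ = ∑ i : ι, (if x ∈ S.blk i then S.k - 1 else 0) :=
        Finset.sum_congr rfl fun i _ => rhs i
    _ = (S.k - 1) * S.r := by
        rw [sum_ite_card, S.rep_count, Nat.mul_comm]

private lemma count2 (x : P) : S.lam * (S.v₀ - 1) = (S.k₀ - 1) * S.r := by
  have lhs : ∀ y : P,
      (∑ i : ι, if (y ≠ x ∧ S.proj y = S.proj x) ∧ x ∈ S.blk i ∧ y ∈ S.blk i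
        then (1:ℕ) else 0)
      = if y ≠ x ∧ S.proj y = S.proj x then S.lam else 0 := by
    intro y
    by_cases h : y ≠ x ∧ S.proj y = S.proj x
    · rw [if_pos h, ← S.pair_count x y (fun e => h.1 e.symm), Finset.card_filter]
      exact Finset.sum_congr rfl fun i _ => by simp [h.1, h.2]
    · simp [h]
  have rhs : ∀ i : ι,
      (∑ y : P, if (y ≠ x ∧ S.proj y = S.proj x) ∧ x ∈ S.blk i ∧ y ∈ S.blk i
        then (1:ℕ) else 0)
      = if x ∈ S.blk i then S.k₀ - 1 else 0 := by
    intro i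
    by_cases h : x ∈ S.blk i
    · rw [if_pos h, ← Finset.card_filter]
      have he : (univ.filter fun y : P =>
            (y ≠ x ∧ S.proj y = S.proj x) ∧ x ∈ S.blk i ∧ y ∈ S.blk i)
          = ((S.blk i).filter fun z => S.proj z = S.proj x).erase x := by
        ext y; simp only [Finset.mem_filter, Finset.mem_erase, Finset.mem_univ,
          true_and]; try tauto
      have hx : x ∈ (S.blk i).filter fun z => S.proj z = S.proj x :=
        Finset.mem_filter.mpr ⟨h, rfl⟩
      have hcard : ((S.blk i).filter fun z => S.proj z = S.proj x).card = S.k₀ := by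
        rcases S.blk_fiber_card i (S.proj x) with h0 | hk
        · exact absurd (Finset.card_pos.mpr ⟨x, hx⟩) (by omega)
        · exact hk
      rw [he, Finset.card_erase_of_mem hx, hcard]
    · simp [h]
  have hxmem : x ∈ univ.filter fun y : P => S.proj y = S.proj x :=
    Finset.mem_filter.mpr ⟨Finset.mem_univ x, rfl⟩
  calc S.lam * (S.v₀ - 1)
      = ∑ y : P, (if y ≠ x ∧ S.proj y = S.proj x then S.lam else 0) := by
        have he : (univ.filter fun y : P => y ≠ x ∧ S.proj y = S.proj x)
            = (univ.filter fun y : P => S.proj y = S.proj x).erase x := by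
          ext y; simp only [Finset.mem_filter, Finset.mem_erase, Finset.mem_univ,
            true_and]; try tauto
        rw [sum_ite_card, he, Finset.card_erase_of_mem hxmem, S.fiber_card]
        exact Nat.mul_comm _ _
    _ = ∑ y : P, ∑ i : ι, (if (y ≠ x ∧ S.proj y = S.proj x) ∧ x ∈ S.blk i ∧
          y ∈ S.blk i then 1 else 0) :=
        Finset.sum_congr rfl fun y _ => (lhs y).symm
    _ = ∑ i : ι, ∑ y : P, (if (y ≠ x ∧ S.proj y = S.proj x) ∧ x ∈ S.blk i ∧
          y ∈ S.blk i then 1 else 0) :=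
        Finset.sum_comm
    _ = ∑ i : ι, (if x ∈ S.blk i then S.k₀ - 1 else 0) :=
        Finset.sum_congr rfl fun i _ => rhs i
    _ = (S.k₀ - 1) * S.r := by
        rw [sum_ite_card, S.rep_count, Nat.mul_comm]

private lemma count3 (q q' : Q) (hqq : q ≠ q') :
    (univ.filter fun i : ι => ((S.blk i).filter fun z => S.proj z = q).Nonempty ∧
        ((S.blk i).filter fun z => S.proj z = q').Nonempty).card * (S.k₀ * S.k₀)
      = S.v₀ * S.v₀ * S.lam := by
  have inner : ∀ x y : P,
      (∑ i : ι, if (S.proj x = q ∧ S.proj y = q') ∧ x ∈ S.blk i ∧ y ∈ S.blk i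
        then (1:ℕ) else 0)
      = if S.proj x = q ∧ S.proj y = q' then S.lam else 0 := by
    intro x y
    by_cases h : S.proj x = q ∧ S.proj y = q'
    · have hxy : x ≠ y := fun e => hqq (h.1 ▸ e ▸ h.2)
      rw [if_pos h, ← S.pair_count x y hxy, Finset.card_filter]
      exact Finset.sum_congr rfl fun i _ => by simp [h.1, h.2]
    · simp [h]
  have perblock : ∀ i : ι,
      (∑ x : P, ∑ y : P, if (S.proj x = q ∧ S.proj y = q') ∧ x ∈ S.blk i ∧
          y ∈ S.blk i then (1:ℕ) else 0)
      = ((S.blk i).filter fun z => S.proj z = q).card *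
          ((S.blk i).filter fun z => S.proj z = q').card := by
    intro i
    have step : ∀ x : P,
        (∑ y : P, if (S.proj x = q ∧ S.proj y = q') ∧ x ∈ S.blk i ∧ y ∈ S.blk i
          then (1:ℕ) else 0)
        = if S.proj x = q ∧ x ∈ S.blk i
            then ((S.blk i).filter fun z => S.proj z = q').card else 0 := by
      intro x
      by_cases h : S.proj x = q ∧ x ∈ S.blk i
      · rw [if_pos h, ← Finset.card_filter]
        congr 1
        ext y; simp only [Finset.mem_filter, Finset.mem_univ, true_and]; try tauto
      · rw [if_neg h]
        refine Finset.sum_eq_zero fun y _ => ?_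
        rw [if_neg]; tauto
    rw [Finset.sum_congr rfl fun x _ => step x, sum_ite_card]
    congr 2
    ext x; simp only [Finset.mem_filter, Finset.mem_univ, true_and]; try tauto
  have perblock2 : ∀ i : ι,
      ((S.blk i).filter fun z => S.proj z = q).card *
          ((S.blk i).filter fun z => S.proj z = q').card
      = if ((S.blk i).filter fun z => S.proj z = q).Nonempty ∧
          ((S.blk i).filter fun z => S.proj z = q').Nonempty
        then S.k₀ * S.k₀ else 0 := by
    intro i
    rcases S.blk_fiber_card i q with h0 | hk
    · rw [h0, if_neg, Nat.zero_mul]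
      rintro ⟨h1, -⟩
      simp [Finset.card_eq_zero.mp h0] at h1
    · rcases S.blk_fiber_card i q' with h0' | hk'
      · rw [h0', if_neg, Nat.mul_zero]
        rintro ⟨-, h1⟩
        simp [Finset.card_eq_zero.mp h0'] at h1
      · rw [hk, hk', if_pos]
        have h2 := S.two_le_k₀
        exact ⟨Finset.card_pos.mp (by omega : 0 < ((S.blk i).filter
            fun z => S.proj z = q).card),
          Finset.card_pos.mp (by omega)⟩
  calc (univ.filter fun i : ι =>
          ((S.blk i).filter fun z => S.proj z = q).Nonempty ∧
          ((S.blk i).filter fun z => S.proj z = q').Nonempty).card * (S.k₀ * S.k₀)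
      = ∑ i : ι, (if ((S.blk i).filter fun z => S.proj z = q).Nonempty ∧
          ((S.blk i).filter fun z => S.proj z = q').Nonempty
          then S.k₀ * S.k₀ else 0) := (sum_ite_card _ _).symm
    _ = ∑ i : ι, ((S.blk i).filter fun z => S.proj z = q).card *
          ((S.blk i).filter fun z => S.proj z = q').card :=
        Finset.sum_congr rfl fun i _ => (perblock2 i).symm
    _ = ∑ i : ι, ∑ x : P, ∑ y : P, (if (S.proj x = q ∧ S.proj y = q') ∧
          x ∈ S.blk i ∧ y ∈ S.blk i then 1 else 0) :=
        Finset.sum_congr rfl fun i _ => (perblock i).symm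
    _ = ∑ x : P, ∑ i : ι, ∑ y : P, (if (S.proj x = q ∧ S.proj y = q') ∧
          x ∈ S.blk i ∧ y ∈ S.blk i then 1 else 0) := Finset.sum_comm
    _ = ∑ x : P, ∑ y : P, ∑ i : ι, (if (S.proj x = q ∧ S.proj y = q') ∧
          x ∈ S.blk i ∧ y ∈ S.blk i then 1 else 0) :=
        Finset.sum_congr rfl fun x _ => Finset.sum_comm
    _ = ∑ x : P, ∑ y : P, (if S.proj x = q ∧ S.proj y = q' then S.lam else 0) :=
        Finset.sum_congr rfl fun x _ => Finset.sum_congr rfl fun y _ => inner x y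
    _ = S.v₀ * S.v₀ * S.lam := by
        have step : ∀ x : P,
            (∑ y : P, if S.proj x = q ∧ S.proj y = q' then S.lam else 0)
            = if S.proj x = q then S.v₀ * S.lam else 0 := by
          intro x
          by_cases h : S.proj x = q
          · rw [if_pos h]
            have : ∀ y : P, (if S.proj x = q ∧ S.proj y = q' then S.lam else 0)
                = if S.proj y = q' then S.lam else 0 := fun y => by simp [h]
            rw [Finset.sum_congr rfl fun y _ => this y, sum_ite_card, S.fiber_card]
          · rw [if_neg h]
            refine Finset.sum_eq_zero fun y _ => ?_
            rw [if_neg]; tauto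
        rw [Finset.sum_congr rfl fun x _ => step x, sum_ite_card, S.fiber_card]
        ring

end AuxCounting

/-- Lemma 3.1 of the paper. Assume Hypothesis 1 (with the
Camina–Zieschang data). Then `2 ≤ k₀ < v₀` and `v₀ ≠ 3`. -/
theorem statement_3 (S : Setting P ι Q G) (h : S.Hyp1) :
    2 ≤ S.k₀ ∧ S.k₀ < S.v₀ ∧ S.v₀ ≠ 3 := by
  obtain ⟨hprime, hdvd, hbound, hmin⟩ := h
  have hlam2 : 2 ≤ S.lam := hprime.two_le
  -- there exist two distinct points
  have hcardP : 1 < Fintype.card P := by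
    rw [S.card_points]
    have := S.two_lt_k; have := S.k_lt_v; omega
  obtain ⟨x, y, hxy⟩ := Fintype.exists_pair_of_one_lt_card hcardP
  -- a block through x exists
  have hblk : ∃ i : ι, x ∈ S.blk i := by
    have hc := S.pair_count x y hxy
    have hne : (univ.filter fun i : ι => x ∈ S.blk i ∧ y ∈ S.blk i).Nonempty :=
      Finset.card_pos.mp (by omega)
    obtain ⟨i, hi⟩ := hne
    exact ⟨i, (Finset.mem_filter.mp hi).2.1⟩
  obtain ⟨i, hxi⟩ := hblk
  -- k₀ ≤ v₀
  have hxmem : x ∈ (S.blk i).filter fun z => S.proj z = S.proj x :=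
    Finset.mem_filter.mpr ⟨hxi, rfl⟩
  have hk₀ : ((S.blk i).filter fun z => S.proj z = S.proj x).card = S.k₀ := by
    rcases S.blk_fiber_card i (S.proj x) with h0 | hk
    · exact absurd (Finset.card_pos.mpr ⟨x, hxmem⟩) (by omega)
    · exact hk
  have hsub : ((S.blk i).filter fun z => S.proj z = S.proj x)
      ⊆ (univ.filter fun z : P => S.proj z = S.proj x) :=
    Finset.filter_subset_filter _ (Finset.subset_univ _)
  have hle : S.k₀ ≤ S.v₀ := by
    rw [← hk₀, ← S.fiber_card (S.proj x)]
    exact Finset.card_le_card hsub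
  -- k₀ < v₀
  have hlt : S.k₀ < S.v₀ := by
    rcases lt_or_eq_of_le hle with h' | h'
    · exact h'
    · exfalso
      have hc2 := count2 S x
      rw [h'] at hc2
      have hv0 : 0 < S.v₀ - 1 := by have := S.one_lt_v₀; omega
      have hc2' : S.lam * (S.v₀ - 1) = S.r * (S.v₀ - 1) := by
        rw [hc2, Nat.mul_comm]
      have hrl : S.lam = S.r := Nat.eq_of_mul_eq_mul_right hv0 hc2'
      have hc1 := count1 S x
      rw [← hrl] at hc1
      have hc1' : S.lam * (S.v - 1) = S.lam * (S.k - 1) := by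
        rw [hc1, Nat.mul_comm]
      have hv : S.v - 1 = S.k - 1 :=
        Nat.eq_of_mul_eq_mul_left (by omega) hc1'
      have := S.two_lt_k; have := S.k_lt_v; omega
  refine ⟨S.two_le_k₀, hlt, ?_⟩
  -- v₀ ≠ 3
  intro hv3
  have hk2 : S.k₀ = 2 := by have := S.two_le_k₀; omega
  obtain ⟨q, q', hqq⟩ := Fintype.exists_pair_of_one_lt_card
    (by rw [S.card_classes]; exact S.one_lt_v₁)
  have hc3 := count3 S q q' hqq
  rw [hk2, hv3] at hc3
  -- hc3 : N * (2*2) = 3*3*λ, λ prime ⇒ impossible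
  have h2 : 2 ∣ 9 * S.lam := ⟨(univ.filter fun i : ι =>
      ((S.blk i).filter fun z => S.proj z = q).Nonempty ∧
      ((S.blk i).filter fun z => S.proj z = q').Nonempty).card * 2, by omega⟩
  have hdl : 2 ∣ S.lam := by
    rcases (Nat.Prime.dvd_mul Nat.prime_two).mp h2 with h' | h'
    · omega
    · exact h'
  have : S.lam = 2 := ((Nat.prime_dvd_prime_iff_eq Nat.prime_two hprime).mp hdl).symm
  omega


end FlagTransitivePaper
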